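/- arXiv:1905.07365 — 2 statements merged into one kernel-verified Lean document; each statement's English description precedes it below -/
import Mathlib

section
/- Let A and B be canonical DBMs over C0 with ⟦B⟧ ≠ ∅. Suppose n ≥ 1 and x₀, …, x_{2n−1} ∈ C0 are pairwise distinct and satisfy, writing x_{2n} = x₀, Σ_{i=0}^{n−1} ( A(x_{2i},x_{2i+1}) + B(x_{2i+1},x_{2i+2}) ) < (0,≤) (in particular all these matrix entries are finite bounds). Then the zone I = {v ∈ ℝ≥0^C : for every 0 ≤ i < n, if B(x_{2i+1},x_{2i+2}) = (k,≺) then v(x_{2i+1}) − v(x_{2i+2}) ≺ k} satisfies ⟦B⟧ ⊆ I and I ∩ ⟦A⟧ = ∅; that is, I is an interpolant for (⟦B⟧,⟦A⟧) defined by at most n atomic constraints. -/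
/-- A bound `(k, ≺)`: an integer `k` together with a strictness flag
(`true` codes `≤`, `false` codes `<`), ordered lexicographically,
so that `(k, <) < (k, ≤) < (k+1, <)`. -/
abbrev Bnd : Type := Lex (ℤ × Bool)

/-- Addition of bounds: `(k,≺) + (k',≺')` is `(k+k', ≺'')` where `≺''` is `≤`
iff both `≺` and `≺'` are `≤`. -/
instance : Add Bnd :=
  ⟨fun a b => toLex ((ofLex a).1 + (ofLex b).1, (ofLex a).2 && (ofLex b).2)⟩

/-- The zero bound is `(0, ≤)`. -/
instance : Zero Bnd := ⟨toLex (0, true)⟩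

instance : AddCommMonoid Bnd where
  toAdd := instAddBnd
  toZero := instZeroBnd
  nsmul := nsmulRec
  add_assoc a b c := by
    change toLex (((ofLex a).1 + (ofLex b).1) + (ofLex c).1,
        (((ofLex a).2 && (ofLex b).2) && (ofLex c).2)) =
      toLex ((ofLex a).1 + ((ofLex b).1 + (ofLex c).1),
        ((ofLex a).2 && ((ofLex b).2 && (ofLex c).2)))
    rw [add_assoc, Bool.and_assoc]
  zero_add a := by
    change toLex ((0 : ℤ) + (ofLex a).1, (true && (ofLex a).2)) = a
    simp
  add_zero a := by
    change toLex ((ofLex a).1 + (0 : ℤ), ((ofLex a).2 && true)) = a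
    simp
  add_comm a b := by
    change toLex ((ofLex a).1 + (ofLex b).1, ((ofLex a).2 && (ofLex b).2)) =
      toLex ((ofLex b).1 + (ofLex a).1, ((ofLex b).2 && (ofLex a).2))
    rw [add_comm, Bool.and_comm]

/-- `satB d b` says that `d ≺ k`, where `b = (k, ≺)`. -/
def satB (d : ℝ) (b : Bnd) : Prop :=
  if (ofLex b).2 then d ≤ ((ofLex b).1 : ℝ) else d < ((ofLex b).1 : ℝ)

variable {C : Type*}

/-- Extended valuation on `C0 = C ∪ {0}`: the special clock `0` is `none`. -/
def val0 (v : C → ℝ) : Option C → ℝ := fun x => x.elim 0 v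

/-- A DBM over `C0 = C ∪ {0}`: entries are bounds or `∞` (`⊤`). -/
abbrev DBM (C : Type*) := Option C → Option C → WithTop Bnd

/-- The zone defined by a DBM. -/
def dbmZone (M : DBM C) : Set (C → ℝ) :=
  {v | (∀ c, 0 ≤ v c) ∧
    ∀ (x y : Option C) (b : Bnd), M x y = (b : WithTop Bnd) →
      satB (val0 v x - val0 v y) b}

/-- A canonical DBM. -/
def Canonical (M : DBM C) : Prop :=
  (∀ x, M x x = ((0 : Bnd) : WithTop Bnd)) ∧
  ∀ x y z, M x z ≤ M x y + M y z



lemma satB_zero : satB 0 0 := by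
  show (if true then ((0:ℝ) ≤ ((0:ℤ):ℝ)) else ((0:ℝ) < ((0:ℤ):ℝ)))
  simp

lemma satB_add {d d' : ℝ} {b b' : Bnd} (h : satB d b) (h' : satB d' b') :
    satB (d + d') (b + b') := by
  unfold satB at *
  have hb2 : (ofLex (b + b')).2 = ((ofLex b).2 && (ofLex b').2) := rfl
  have hb1 : (ofLex (b + b')).1 = (ofLex b).1 + (ofLex b').1 := rfl
  rw [hb2, hb1]
  cases hs : (ofLex b).2 <;> cases hs' : (ofLex b').2 <;>
    simp_all <;> push_cast <;> linarith

lemma satB_sum {ι : Type*} (s : Finset ι) (d : ι → ℝ) (b : ι → Bnd)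
    (h : ∀ i ∈ s, satB (d i) (b i)) :
    satB (∑ i ∈ s, d i) (∑ i ∈ s, b i) := by
  induction s using Finset.cons_induction with
  | empty => simpa using satB_zero
  | cons a s ha ih =>
      rw [Finset.sum_cons, Finset.sum_cons]
      exact satB_add (h a (by simp)) (ih fun i hi => h i (by simp [hi]))

lemma not_satB_zero {b : Bnd} (hb : b < 0) : ¬ satB 0 b := by
  have hb' : (ofLex b).1 < 0 ∨ (ofLex b).1 = 0 ∧ (ofLex b).2 < true := by
    have : toLex (ofLex b) < toLex ((0 : ℤ), true) := hb
    simpa using (Prod.Lex.lt_iff).1 this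
  unfold satB
  rcases hb' with h | ⟨h1, h2⟩
  · cases hs : (ofLex b).2 <;> simp_all <;> omega
  · have hs : (ofLex b).2 = false := by
      cases hs : (ofLex b).2
      · rfl
      · rw [hs] at h2; exact absurd h2 (by simp)
    simp [hs, h1]

/-- Given canonical DBMs `A`, `B` with `⟦B⟧ ≠ ∅`, and a negative-weight cycle
`x₀, …, x_{2n−1}` (pairwise distinct, `x_{2n} = x₀`) alternating between `A`-
and `B`-edges, the zone `I` defined by the atomic constraints corresponding to
the `n` entries `B(x_{2i+1}, x_{2i+2})` is an interpolant for `(⟦B⟧, ⟦A⟧)`: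

`⟦B⟧ ⊆ I` and `I ∩ ⟦A⟧ = ∅`. -/
theorem interpolant_from_alternating_cycle {C : Type*}
    (A B : DBM C) (hA : Canonical A) (hB : Canonical B)
    (hBne : (dbmZone B).Nonempty)
    (n : ℕ) (hn : 1 ≤ n) (x : ℕ → Option C)
    (hinj : Set.InjOn x (Set.Iio (2 * n)))
    (hcyc : (∑ i ∈ Finset.range n,
        (A (x (2 * i)) (x (2 * i + 1)) +
         B (x (2 * i + 1)) (x ((2 * i + 2) % (2 * n))))) <
      ((0 : Bnd) : WithTop Bnd)) :
    let I : Set (C → ℝ) :=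
      {v | (∀ c, 0 ≤ v c) ∧
        ∀ i < n, ∀ b : Bnd,
          B (x (2 * i + 1)) (x ((2 * i + 2) % (2 * n))) = (b : WithTop Bnd) →
          satB (val0 v (x (2 * i + 1)) - val0 v (x ((2 * i + 2) % (2 * n)))) b}
    dbmZone B ⊆ I ∧ I ∩ dbmZone A = ∅ := by
  intro I
  constructor
  · intro v hv
    exact ⟨hv.1, fun i _ b hb => hv.2 _ _ b hb⟩
  · rw [Set.eq_empty_iff_forall_notMem]
    rintro v ⟨⟨hv0, hI⟩, hvA⟩
    -- all entries along the cycle are finite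
    have hne : ∀ i ∈ Finset.range n,
        A (x (2 * i)) (x (2 * i + 1)) +
          B (x (2 * i + 1)) (x ((2 * i + 2) % (2 * n))) ≠ ⊤ := by
      intro i hi hcontra
      have : (∑ i ∈ Finset.range n,
          (A (x (2 * i)) (x (2 * i + 1)) +
           B (x (2 * i + 1)) (x ((2 * i + 2) % (2 * n))))) = ⊤ :=
        WithTop.sum_eq_top.2 ⟨i, hi, hcontra⟩
      rw [this] at hcyc
      exact absurd hcyc (by simp)
    have hfin : ∀ i : ℕ, ∃ a b : Bnd, i < n →
        A (x (2 * i)) (x (2 * i + 1)) = (a : WithTop Bnd) ∧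
        B (x (2 * i + 1)) (x ((2 * i + 2) % (2 * n))) = (b : WithTop Bnd) := by
      intro i
      by_cases hi : i < n
      · have h := hne i (Finset.mem_range.2 hi)
        have hAne : A (x (2 * i)) (x (2 * i + 1)) ≠ ⊤ := fun h' => h (by simp [h'])
        have hBne' : B (x (2 * i + 1)) (x ((2 * i + 2) % (2 * n))) ≠ ⊤ :=
          fun h' => h (by simp [h'])
        obtain ⟨a, ha⟩ := WithTop.ne_top_iff_exists.1 hAne
        obtain ⟨b, hb⟩ := WithTop.ne_top_iff_exists.1 hBne'
        exact ⟨a, b, fun _ => ⟨ha.symm, hb.symm⟩⟩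
      · exact ⟨0, 0, fun h => absurd h hi⟩
    choose a b hab using hfin
    -- rewrite the cycle sum through the coercion
    have hsum : (∑ i ∈ Finset.range n,
        (A (x (2 * i)) (x (2 * i + 1)) +
         B (x (2 * i + 1)) (x ((2 * i + 2) % (2 * n))))) =
        ((∑ i ∈ Finset.range n, (a i + b i) : Bnd) : WithTop Bnd) := by
      rw [WithTop.coe_sum]
      refine Finset.sum_congr rfl fun i hi => ?_
      obtain ⟨ha, hb⟩ := hab i (Finset.mem_range.1 hi)
      rw [ha, hb, WithTop.coe_add]
    rw [hsum, WithTop.coe_lt_coe] at hcyc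
    -- the valuation satisfies every bound along the cycle
    set d : ℕ → ℝ := fun i =>
      (val0 v (x (2 * i)) - val0 v (x (2 * i + 1))) +
      (val0 v (x (2 * i + 1)) - val0 v (x ((2 * i + 2) % (2 * n)))) with hd
    have hsat : ∀ i ∈ Finset.range n, satB (d i) (a i + b i) := by
      intro i hi
      have hi' := Finset.mem_range.1 hi
      obtain ⟨ha, hb⟩ := hab i hi'
      exact satB_add (hvA.2 _ _ _ ha) (hI i hi' (b i) hb)
    have htot := satB_sum (Finset.range n) d (fun i => a i + b i) hsat
    -- the differences telescope to zero
    have hdsum : (∑ i ∈ Finset.range n, d i) = 0 := by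
      have hg : ∀ i ∈ Finset.range n,
          d i = (fun j => val0 v (x ((2 * j) % (2 * n)))) i -
                (fun j => val0 v (x ((2 * j) % (2 * n)))) (i + 1) := by
        intro i hi
        have hi' := Finset.mem_range.1 hi
        have h1 : (2 * i) % (2 * n) = 2 * i :=
          Nat.mod_eq_of_lt (by omega)
        have h2 : 2 * (i + 1) = 2 * i + 2 := by ring
        simp only [hd, h1, h2]
        ring
      rw [Finset.sum_congr rfl hg, Finset.sum_range_sub']
      simp [Nat.mod_self]
    rw [hdsum] at htot
    exact not_satB_zero hcyc htot
end

section
/- Let A and B be canonical DBMs over C0. Suppose there exist m ≥ 1 and x₀, …, x_{m−1} ∈ C0 (with x_m = x₀) such that Σ_{i=0}^{m−1} min( A(x_i,x_{i+1}), B(x_i,x_{i+1}) ) < (0,≤), i.e., the entrywise minimum of A and B has a cycle of negative weight. Then there exist n with 1 ≤ n ≤ (|C|+1)/2 and pairwise distinct y₀, …, y_{2n−1} ∈ C0 such that, writing y_{2n} = y₀, Σ_{i=0}^{n−1} ( A(y_{2i},y_{2i+1}) + B(y_{2i+1},y_{2i+2}) ) < (0,≤); that is, there is a negative cycle with pairwise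 distinct vertices that strictly alternates between edges weighted by A and edges weighted by B. -/
variable {C : Type*}

section Aux

attribute [instance 1100] instAddBnd instZeroBnd instAddCommMonoidBnd

instance (priority := 1100) : AddCommSemigroup Bnd := instAddCommMonoidBnd.toAddCommSemigroup
instance (priority := 1100) : AddMonoid Bnd := instAddCommMonoidBnd.toAddMonoid
instance (priority := 1100) : AddSemigroup Bnd := instAddCommMonoidBnd.toAddMonoid.toAddSemigroup
instance (priority := 1100) : AddZeroClass Bnd := instAddCommMonoidBnd.toAddMonoid.toAddZeroClass
instance (priority := 1100) : AddCommMagma Bnd :=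
  @AddCommSemigroup.toAddCommMagma Bnd (@AddCommMonoid.toAddCommSemigroup Bnd instAddCommMonoidBnd)

lemma bnd_add_le_add_left {a b : Bnd} (hab : a ≤ b) (c : Bnd) : c + a ≤ c + b := by
  change toLex ((ofLex c).1 + (ofLex a).1, (ofLex c).2 && (ofLex a).2) ≤
    toLex ((ofLex c).1 + (ofLex b).1, (ofLex c).2 && (ofLex b).2)
  rcases Prod.Lex.le_iff.mp hab with h | ⟨h1, h2⟩
  · exact Prod.Lex.le_iff.mpr (Or.inl (add_lt_add_right h _))
  · refine Prod.Lex.le_iff.mpr (Or.inr ⟨by rw [h1]; rfl, ?_⟩)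
    revert h2
    cases (ofLex a).2 <;> cases (ofLex b).2 <;> cases (ofLex c).2 <;> simp

lemma bnd_add_le_add {a b c d : Bnd} (h1 : a ≤ b) (h2 : c ≤ d) : a + c ≤ b + d := by
  have t1 : a + c ≤ a + d := bnd_add_le_add_left h2 a
  have t2 : d + a ≤ d + b := bnd_add_le_add_left h1 d
  rw [add_comm d a, add_comm d b] at t2
  exact t1.trans t2

lemma coe_zero' : ((0:Bnd) : WithTop Bnd) = (0 : WithTop Bnd) := rfl

lemma add_le_add' {a b c d : WithTop Bnd} (h1 : a ≤ b) (h2 : c ≤ d) : a + c ≤ b + d := by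
  cases b with
  | top => rw [WithTop.top_add]; exact le_top
  | coe x =>
    cases d with
    | top => rw [WithTop.add_top]; exact le_top
    | coe y =>
      rcases WithTop.le_coe_iff.mp h1 with ⟨a', rfl, ha⟩
      rcases WithTop.le_coe_iff.mp h2 with ⟨c', rfl, hc⟩
      rw [← WithTop.coe_add, ← WithTop.coe_add, WithTop.coe_le_coe]
      exact bnd_add_le_add ha hc

lemma bnd_add_nonneg {a b : Bnd} (ha : 0 ≤ a) (hb : 0 ≤ b) : 0 ≤ a + b := by
  have := bnd_add_le_add ha hb
  rwa [zero_add] at this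

lemma add_nonneg' {a b : WithTop Bnd} (ha : 0 ≤ a) (hb : 0 ≤ b) : 0 ≤ a + b := by
  cases a with
  | top => simp
  | coe x =>
    cases b with
    | top => simp
    | coe y =>
      rw [← WithTop.coe_add, ← coe_zero', WithTop.coe_le_coe]
      rw [← coe_zero', WithTop.coe_le_coe] at ha hb
      exact bnd_add_nonneg ha hb

lemma neg_split {a b : WithTop Bnd} (h : a + b < ((0:Bnd) : WithTop Bnd)) :
    a < ((0:Bnd) : WithTop Bnd) ∨ b < ((0:Bnd) : WithTop Bnd) := by
  rw [coe_zero'] at h ⊢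
  by_contra hc
  push_neg at hc
  exact absurd (add_nonneg' hc.1 hc.2) (not_le.mpr h)

/-- Weight of an edge labelled by `l` (`true` = `A`-edge, `false` = `B`-edge). -/
def wgt (A B : DBM C) (l : Bool) (u v : Option C) : WithTop Bnd := if l then A u v else B u v

/-- Default element for `List.getD`. -/
def dflt {C : Type*} : Option C × Bool := (none, true)

/-- Weight of a labelled path starting at `h`, through `r`, ending at `t`. -/
def pw (A B : DBM C) : Option C × Bool → List (Option C × Bool) → Option C → WithTop Bnd
  | p, [], t => wgt A B p.2 p.1 t
  | p, q :: r, t => wgt A B p.2 p.1 q.1 + pw A B q r t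

/-- Weight of a labelled cycle. -/
def cyc (A B : DBM C) : List (Option C × Bool) → WithTop Bnd
  | [] => 0
  | p :: r => pw A B p r p.1

lemma pw_append (A B : DBM C) (q : Option C × Bool) :
    ∀ (r1 : List (Option C × Bool)) (h : Option C × Bool) (r2 : List (Option C × Bool))
      (t : Option C),
      pw A B h (r1 ++ q :: r2) t = pw A B h r1 q.1 + pw A B q r2 t
  | [], h, r2, t => rfl
  | p :: r1, h, r2, t => by
    show wgt A B h.2 h.1 p.1 + pw A B p (r1 ++ q :: r2) t = _
    rw [pw_append A B q r1 p r2 t]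
    show _ = (wgt A B h.2 h.1 p.1 + pw A B p r1 q.1) + pw A B q r2 t
    rw [add_assoc]

lemma cyc_rotate_one (A B : DBM C) (c : List (Option C × Bool)) :
    cyc A B (c.rotate 1) = cyc A B c := by
  match c with
  | [] => rfl
  | [p] => rw [List.rotate_cons_succ, List.rotate_zero]; rfl
  | p :: q :: r =>
    rw [List.rotate_cons_succ, List.rotate_zero]
    show pw A B q (r ++ p :: []) q.1 = pw A B p (q :: r) p.1
    rw [pw_append]
    show pw A B q r p.1 + wgt A B p.2 p.1 q.1 = wgt A B p.2 p.1 q.1 + pw A B q r p.1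
    rw [add_comm]

lemma cyc_rotate (A B : DBM C) (c : List (Option C × Bool)) :
    ∀ n, cyc A B (c.rotate n) = cyc A B c
  | 0 => by rw [List.rotate_zero]
  | n+1 => by
    rw [← List.rotate_rotate, cyc_rotate_one, cyc_rotate A B c n]

lemma wgt_tri {A B : DBM C} (hA : Canonical A) (hB : Canonical B) (l : Bool) (u v t : Option C) :
    wgt A B l u t ≤ wgt A B l u v + wgt A B l v t := by
  cases l
  · exact hB.2 u v t
  · exact hA.2 u v t

lemma wgt_refl {A B : DBM C} (hA : Canonical A) (hB : Canonical B) (l : Bool) (u : Option C) :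
    wgt A B l u u = ((0:Bnd) : WithTop Bnd) := by
  cases l
  · exact hB.1 u
  · exact hA.1 u

lemma pw_tri {A B : DBM C} (hA : Canonical A) (hB : Canonical B) (l : Bool) (u v : Option C) :
    ∀ (r : List (Option C × Bool)) (t : Option C),
      pw A B (u, l) r t ≤ wgt A B l u v + pw A B (v, l) r t
  | [], t => wgt_tri hA hB l u v t
  | q :: r, t => by
    show wgt A B l u q.1 + pw A B q r t ≤ wgt A B l u v + (wgt A B l v q.1 + pw A B q r t)
    rw [← add_assoc]
    exact add_le_add' (wgt_tri hA hB l u v q.1) le_rfl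

lemma pw_eq_sum (A B : DBM C) :
    ∀ (r : List (Option C × Bool)) (h : Option C × Bool) (t : Option C),
      pw A B h r t = (∑ i ∈ Finset.range r.length,
          wgt A B ((h::r).getD i dflt).2 ((h::r).getD i dflt).1 (((h::r).getD (i+1) dflt).1))
        + wgt A B ((h::r).getD r.length dflt).2 ((h::r).getD r.length dflt).1 t
  | [], h, t => by simp [pw]
  | q :: r, h, t => by
    show wgt A B h.2 h.1 q.1 + pw A B q r t = _
    rw [pw_eq_sum A B r q t, List.length_cons, Finset.sum_range_succ']
    simp only [List.getD_cons_succ, List.getD_cons_zero]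
    rw [← add_assoc, add_comm (wgt A B h.2 h.1 q.1)]

lemma cyc_eq_sum (A B : DBM C) (c : List (Option C × Bool)) (hne : c ≠ []) :
    cyc A B c = ∑ i ∈ Finset.range c.length,
      wgt A B (c.getD i dflt).2 (c.getD i dflt).1 ((c.getD ((i+1) % c.length) dflt).1) := by
  match c, hne with
  | h :: r, _ =>
    show pw A B h r h.1 = _
    rw [pw_eq_sum A B r h h.1, List.length_cons, Finset.sum_range_succ]
    congr 1
    · refine Finset.sum_congr rfl fun i hi => ?_
      rw [Finset.mem_range] at hi
      rw [Nat.mod_eq_of_lt (by omega)]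
    · rw [Nat.mod_self, List.getD_cons_zero]

lemma sum_pair {M : Type*} [AddCommMonoid M] (g : ℕ → M) (n : ℕ) :
    ∑ i ∈ Finset.range (2 * n), g i = ∑ i ∈ Finset.range n, (g (2 * i) + g (2 * i + 1)) := by
  induction n with
  | zero => simp
  | succ n ih =>
    rw [Finset.sum_range_succ, ← ih, Nat.mul_succ, Finset.sum_range_succ, Finset.sum_range_succ,
      add_assoc]

lemma main_ind {C : Type*} [Fintype C] (A B : DBM C) (hA : Canonical A) (hB : Canonical B) :
    ∀ (N : ℕ) (c : List (Option C × Bool)), c.length ≤ N → c ≠ [] →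
      cyc A B c < ((0 : Bnd) : WithTop Bnd) →
      ∃ n : ℕ, 1 ≤ n ∧ 2 * n ≤ Fintype.card C + 1 ∧
        ∃ y : ℕ → Option C, Set.InjOn y (Set.Iio (2 * n)) ∧
          (∑ i ∈ Finset.range n,
              (A (y (2 * i)) (y (2 * i + 1)) +
               B (y (2 * i + 1)) (y ((2 * i + 2) % (2 * n))))) <
            ((0 : Bnd) : WithTop Bnd) := by
  intro N
  induction N with
  | zero =>
    intro c hlen hne _
    cases c with
    | nil => exact absurd rfl hne
    | cons p r => simp at hlen
  | succ N ih =>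
    intro c hlen hne hneg
    by_cases hone : c.length = 1
    · exfalso
      obtain ⟨p, rfl⟩ : ∃ p, c = [p] := by
        match c, hone with
        | [p], _ => exact ⟨p, rfl⟩
      have h0 : cyc A B [p] = wgt A B p.2 p.1 p.1 := rfl
      rw [h0, wgt_refl hA hB] at hneg
      exact lt_irrefl _ hneg
    have hlen2 : 2 ≤ c.length := by
      have : c.length ≠ 0 := fun h => hne (List.length_eq_zero_iff.mp h)
      omega
    by_cases hadj : ∃ i < c.length, (c.getD i dflt).2 = (c.getD ((i+1) % c.length) dflt).2
    · -- two cyclically adjacent edges with the same label: merge them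
      obtain ⟨i, hi, heq⟩ := hadj
      have hlenr : (c.rotate i).length = c.length := List.length_rotate c i
      have hrot : ∀ jj, jj < c.length →
          (c.rotate i).getD jj dflt = c.getD ((jj + i) % c.length) dflt := by
        intro jj hjj
        rw [List.getD_eq_getElem _ _ (by omega),
          List.getD_eq_getElem _ _ (Nat.mod_lt _ (by omega))]
        exact List.getElem_rotate c i jj (by omega)
      obtain ⟨p, q, r, hpqr⟩ : ∃ p q r, c.rotate i = p :: q :: r := by
        match hx : c.rotate i, (show 2 ≤ (c.rotate i).length by omega) with
        | p :: q :: r, _ => exact ⟨p, q, r, rfl⟩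
      have e0 : (c.rotate i).getD 0 dflt = c.getD i dflt := by
        have h := hrot 0 (by omega)
        rwa [show (0 + i) % c.length = i by rw [Nat.zero_add, Nat.mod_eq_of_lt hi]] at h
      have e1 : (c.rotate i).getD 1 dflt = c.getD ((i+1) % c.length) dflt := by
        have h := hrot 1 (by omega)
        rwa [Nat.add_comm 1 i] at h
      have hlab : p.2 = q.2 := by
        have h01 : ((c.rotate i).getD 0 dflt).2 = ((c.rotate i).getD 1 dflt).2 := by
          rw [e0, e1]; exact heq
        rwa [hpqr, List.getD_cons_zero, List.getD_cons_succ, List.getD_cons_zero] at h01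
      have hle : cyc A B (p :: r) ≤ cyc A B c := by
        have t := pw_tri hA hB p.2 p.1 q.1 r p.1
        have hq : (q.1, p.2) = q := by rw [hlab]
        rw [hq] at t
        calc cyc A B (p :: r) = pw A B (p.1, p.2) r p.1 := rfl
        _ ≤ wgt A B p.2 p.1 q.1 + pw A B q r p.1 := t
        _ = cyc A B (p :: q :: r) := rfl
        _ = cyc A B (c.rotate i) := by rw [hpqr]
        _ = cyc A B c := cyc_rotate A B c i
      have hlen3 : (p :: r).length ≤ N := by
        have hl := congrArg List.length hpqr
        simp only [List.length_rotate, List.length_cons] at hl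
        simp only [List.length_cons]
        omega
      exact ih (p :: r) hlen3 (List.cons_ne_nil _ _) (lt_of_le_of_lt hle hneg)
    · push_neg at hadj
      by_cases hnd : (c.map Prod.fst).Nodup
      · -- alternating labels and distinct vertices: conclude
        have final : ∀ (c2 : List (Option C × Bool)), c2.length = c.length →
            cyc A B c2 < ((0:Bnd) : WithTop Bnd) → (c2.map Prod.fst).Nodup →
            (∀ i < c2.length, (c2.getD i dflt).2 ≠ (c2.getD ((i+1) % c2.length) dflt).2) →
            (c2.getD 0 dflt).2 = true →
            ∃ n : ℕ, 1 ≤ n ∧ 2 * n ≤ Fintype.card C + 1 ∧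
              ∃ y : ℕ → Option C, Set.InjOn y (Set.Iio (2 * n)) ∧
                (∑ i ∈ Finset.range n,
                    (A (y (2 * i)) (y (2 * i + 1)) +
                     B (y (2 * i + 1)) (y ((2 * i + 2) % (2 * n))))) <
                  ((0 : Bnd) : WithTop Bnd) := by
          intro c2 hl2 hneg2 hnd2 halt2 h02
          have hlen2' : 2 ≤ c2.length := by omega
          have hlabel : ∀ i, i < c2.length → (c2.getD i dflt).2 = decide (i % 2 = 0) := by
            intro i
            induction i with
            | zero => intro _; simpa using h02
            | succ i ihi =>
              intro hi1
              have hi : i < c2.length := by omega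
              have hne2 := halt2 i hi
              rw [Nat.mod_eq_of_lt (show i+1 < c2.length by omega)] at hne2
              rw [ihi hi] at hne2
              have hflip : (c2.getD (i+1) dflt).2 = !decide (i % 2 = 0) := by
                revert hne2
                cases (c2.getD (i+1) dflt).2 <;> cases hd : decide (i % 2 = 0) <;> simp
              rw [hflip]
              by_cases hp : i % 2 = 0
              · have hq : (i+1) % 2 = 1 := by omega
                rw [hp, hq]
                simp
              · have hp1 : i % 2 = 1 := by omega
                have hq : (i+1) % 2 = 0 := by omega
                rw [hp1, hq]
                simp
          have heven : c2.length % 2 = 0 := by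
            have hlast := halt2 (c2.length - 1) (by omega)
            rw [show c2.length - 1 + 1 = c2.length by omega, Nat.mod_self, h02,
              hlabel (c2.length - 1) (by omega)] at hlast
            by_cases hp : (c2.length - 1) % 2 = 0
            · simp [hp] at hlast
            · omega
          have h2n : 2 * (c2.length / 2) = c2.length := by omega
          refine ⟨c2.length / 2, by omega, ?_, fun i => (c2.getD i dflt).1, ?_, ?_⟩
          · have hb := List.Nodup.length_le_card hnd2
            rw [List.length_map, Fintype.card_option] at hb
            omega
          · intro a ha b hb hy
            rw [Set.mem_Iio] at ha hb
            have ha' : a < c2.length := by omega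
            have hb' : b < c2.length := by omega
            have hinj := List.nodup_iff_injective_get.mp hnd2
            have hg : (c2.map Prod.fst).get ⟨a, by rw [List.length_map]; omega⟩ =
                (c2.map Prod.fst).get ⟨b, by rw [List.length_map]; omega⟩ := by
              rw [List.get_eq_getElem, List.get_eq_getElem, List.getElem_map, List.getElem_map,
                ← List.getD_eq_getElem c2 dflt ha', ← List.getD_eq_getElem c2 dflt hb']
              exact hy
            have := hinj hg
            exact congrArg Fin.val this
          · have hsum := cyc_eq_sum A B c2 (by
              intro h
              rw [h] at hlen2'
              simp at hlen2')
            rw [← h2n, sum_pair] at hsum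
            have key : (∑ i ∈ Finset.range (c2.length / 2),
                (A ((c2.getD (2*i) dflt).1) ((c2.getD (2*i+1) dflt).1) +
                 B ((c2.getD (2*i+1) dflt).1)
                   ((c2.getD ((2*i+2) % (2 * (c2.length / 2))) dflt).1))) = cyc A B c2 := by
              rw [hsum]
              refine Finset.sum_congr rfl fun i hi => ?_
              rw [Finset.mem_range] at hi
              have l1 : (c2.getD (2*i) dflt).2 = true := by
                rw [hlabel (2*i) (by omega), show (2*i) % 2 = 0 by omega]
                simp
              have l2 : (c2.getD (2*i+1) dflt).2 = false := by
                rw [hlabel (2*i+1) (by omega), show (2*i+1) % 2 = 1 by omega]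
                simp
              have m1 : (2*i+1) % (2 * (c2.length / 2)) = 2*i+1 := Nat.mod_eq_of_lt (by omega)
              rw [l1, l2, m1]
              rfl
            rw [key]
            exact hneg2
        by_cases h0 : (c.getD 0 dflt).2 = true
        · exact final c rfl hneg hnd hadj h0
        · have h0f : (c.getD 0 dflt).2 = false := by
            revert h0
            cases (c.getD 0 dflt).2 <;> simp
          have hrot1 : ∀ jj, jj < c.length →
              (c.rotate 1).getD jj dflt = c.getD ((jj + 1) % c.length) dflt := by
            intro jj hjj
            rw [List.getD_eq_getElem _ _ (by rw [List.length_rotate]; omega),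
              List.getD_eq_getElem _ _ (Nat.mod_lt _ (by omega))]
            exact List.getElem_rotate c 1 jj (by rw [List.length_rotate]; omega)
          refine final (c.rotate 1) (List.length_rotate c 1)
            (by rw [cyc_rotate]; exact hneg) ?_ ?_ ?_
          · rw [List.map_rotate]
            exact List.nodup_rotate.mpr hnd
          · intro i hi
            rw [List.length_rotate] at hi ⊢
            rw [hrot1 i hi, hrot1 ((i+1) % c.length) (Nat.mod_lt _ (by omega)),
              Nat.mod_add_mod]
            have h := hadj ((i+1) % c.length) (Nat.mod_lt _ (by omega))
            rwa [Nat.mod_add_mod] at h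
          · rw [hrot1 0 (by omega),
              show (0+1) % c.length = 1 from Nat.mod_eq_of_lt (by omega)]
            have h := hadj 0 (by omega)
            rw [h0f, show (0+1) % c.length = 1 from Nat.mod_eq_of_lt (by omega)] at h
            revert h
            cases (c.getD 1 dflt).2 <;> simp
      · -- a repeated vertex: split the cycle in two
        rw [List.nodup_iff_injective_get, Function.not_injective_iff] at hnd
        obtain ⟨a, b, hab, hne'⟩ := hnd
        have hmaplen : (c.map Prod.fst).length = c.length := List.length_map _
        have hex : ∃ i j, i < j ∧ j < c.length ∧ (c.getD i dflt).1 = (c.getD j dflt).1 := by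
          have hval : ∀ (k : Fin (c.map Prod.fst).length),
              (c.map Prod.fst).get k = (c.getD k.1 dflt).1 := by
            intro k
            rw [List.get_eq_getElem, List.getElem_map, List.getD_eq_getElem _ _ (by omega)]
          have hv : (c.getD a.1 dflt).1 = (c.getD b.1 dflt).1 := by
            rw [← hval a, ← hval b, hab]
          have hvne : a.1 ≠ b.1 := fun h => hne' (Fin.ext h)
          rcases Nat.lt_or_ge a.1 b.1 with h | h
          · exact ⟨a.1, b.1, h, by omega, hv⟩
          · exact ⟨b.1, a.1, by omega, by omega, hv.symm⟩
        obtain ⟨i, j, hij, hjlen, hfst⟩ := hex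
        have hk1 : 1 ≤ j - i := by omega
        have hklen : j - i < c.length := by omega
        have hlenr : (c.rotate i).length = c.length := List.length_rotate c i
        have hrot : ∀ jj, jj < c.length →
            (c.rotate i).getD jj dflt = c.getD ((jj + i) % c.length) dflt := by
          intro jj hjj
          rw [List.getD_eq_getElem _ _ (by omega),
            List.getD_eq_getElem _ _ (Nat.mod_lt _ (by omega))]
          exact List.getElem_rotate c i jj (by omega)
        obtain ⟨h1, r1, hc'⟩ : ∃ h1 r1, c.rotate i = h1 :: r1 := by
          match hx : c.rotate i, (show 2 ≤ (c.rotate i).length by omega) with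
          | p :: r, _ => exact ⟨p, r, rfl⟩
        have hr1len : r1.length = c.length - 1 := by
          have hl := congrArg List.length hc'
          simp only [List.length_rotate, List.length_cons] at hl
          omega
        obtain ⟨h2, r2, hc2⟩ : ∃ h2 r2, r1.drop (j - i - 1) = h2 :: r2 := by
          match hx : r1.drop (j - i - 1), (show 1 ≤ (r1.drop (j - i - 1)).length by
            rw [List.length_drop]; omega) with
          | p :: r, _ => exact ⟨p, r, rfl⟩
        have hr2len : r2.length = c.length - (j - i) - 1 := by
          have hl := congrArg List.length hc2
          rw [List.length_drop] at hl
          simp only [List.length_cons] at hl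
          omega
        have hh1 : h1 = c.getD i dflt := by
          have h := hrot 0 (by omega)
          rw [hc', List.getD_cons_zero,
            show (0 + i) % c.length = i by rw [Nat.zero_add, Nat.mod_eq_of_lt (by omega)]] at h
          exact h
        have hh2v : h2 = c.getD j dflt := by
          have e2 : h2 = r1.getD (j - i - 1) dflt := by
            have hlt : j - i - 1 < r1.length := by omega
            have h0 : (r1.drop (j - i - 1)).getD 0 dflt = h2 := by
              rw [hc2]; rfl
            rw [← h0, List.getD_eq_getElem _ _ (by rw [List.length_drop]; omega),
              List.getD_eq_getElem _ _ hlt]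
            exact List.getElem_drop
          have e3 : (c.rotate i).getD (j - i) dflt = r1.getD (j - i - 1) dflt := by
            obtain ⟨k', hk'⟩ : ∃ k', j - i = k' + 1 := ⟨j - i - 1, by omega⟩
            rw [hc', hk', List.getD_cons_succ, show k' + 1 - 1 = k' from rfl]
          have h := hrot (j - i) hklen
          rw [e3, ← e2] at h
          rw [h, show (j - i + i) % c.length = j by
            rw [show j - i + i = j by omega, Nat.mod_eq_of_lt hjlen]]
        have hh2 : h2.1 = h1.1 := by rw [hh1, hh2v, hfst]
        have hsplit : cyc A B c = cyc A B (h1 :: r1.take (j - i - 1)) + cyc A B (h2 :: r2) := by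
          rw [← cyc_rotate A B c i, hc']
          show pw A B h1 r1 h1.1 = _
          conv_lhs => rw [← List.take_append_drop (j - i - 1) r1, hc2]
          rw [pw_append]
          show pw A B h1 (r1.take (j - i - 1)) h2.1 + pw A B h2 r2 h1.1 =
            pw A B h1 (r1.take (j - i - 1)) h1.1 + pw A B h2 r2 h2.1
          rw [hh2]
        rw [hsplit] at hneg
        rcases neg_split hneg with h | h
        · refine ih (h1 :: r1.take (j - i - 1)) ?_ (List.cons_ne_nil _ _) h
          simp only [List.length_cons, List.length_take]
          omega
        · refine ih (h2 :: r2) ?_ (List.cons_ne_nil _ _) h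
          simp only [List.length_cons]
          omega

end Aux

/-- If the entrywise minimum of two canonical DBMs `A`, `B` has a cycle
`x₀, …, x_{m−1}` (with `x_m = x₀`) of negative weight, then there is a
negative-weight cycle `y₀, …, y_{2n−1}` (pairwise distinct, `y_{2n} = y₀`,
`1 ≤ n` and `2n ≤ |C| + 1`) that strictly alternates between `A`-edges and
`B`-edges. -/
theorem alternating_negative_cycle_of_negative_cycle {C : Type*} [Fintype C]
    (A B : DBM C) (hA : Canonical A) (hB : Canonical B)
    (m : ℕ) (hm : 1 ≤ m) (x : ℕ → Option C)
    (hcyc : (∑ i ∈ Finset.range m,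
        min (A (x i) (x ((i + 1) % m))) (B (x i) (x ((i + 1) % m)))) <
      ((0 : Bnd) : WithTop Bnd)) :
    ∃ n : ℕ, 1 ≤ n ∧ 2 * n ≤ Fintype.card C + 1 ∧
      ∃ y : ℕ → Option C, Set.InjOn y (Set.Iio (2 * n)) ∧
        (∑ i ∈ Finset.range n,
            (A (y (2 * i)) (y (2 * i + 1)) +
             B (y (2 * i + 1)) (y ((2 * i + 2) % (2 * n))))) <
          ((0 : Bnd) : WithTop Bnd) := by
  classical
  set f : ℕ → Option C × Bool := fun i =>
    (x i, decide (A (x i) (x ((i+1) % m)) ≤ B (x i) (x ((i+1) % m)))) with hf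
  set c : List (Option C × Bool) := (List.range m).map f with hcdef
  have hlen : c.length = m := by rw [hcdef, List.length_map, List.length_range]
  have hne : c ≠ [] := by
    intro h
    rw [h] at hlen
    simp at hlen
    omega
  have hgetD : ∀ i, i < m → c.getD i dflt = f i := by
    intro i hi
    rw [hcdef, List.getD_eq_getElem _ _ (by simpa using hi), List.getElem_map]
    congr 1
    simp
  have hcyc' : cyc A B c < ((0:Bnd) : WithTop Bnd) := by
    rw [cyc_eq_sum A B c hne, hlen]
    calc (∑ i ∈ Finset.range m,
            wgt A B (c.getD i dflt).2 (c.getD i dflt).1 ((c.getD ((i+1) % m) dflt).1))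
        = ∑ i ∈ Finset.range m,
            min (A (x i) (x ((i+1) % m))) (B (x i) (x ((i+1) % m))) := by
          refine Finset.sum_congr rfl fun i hi => ?_
          rw [Finset.mem_range] at hi
          rw [hgetD i hi, hgetD ((i+1) % m) (Nat.mod_lt _ (by omega))]
          simp only [hf]
          by_cases hl : A (x i) (x ((i+1) % m)) ≤ B (x i) (x ((i+1) % m))
          · rw [min_eq_left hl]; simp [wgt, hl]
          · rw [min_eq_right (le_of_not_ge hl)]; simp [wgt, hl]
      _ < _ := hcyc
  exact main_ind A B hA hB c.length c le_rfl hne hcyc'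
end
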